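/- No randomized approval-based committee rule satisfying ε-DP for some ε > 0 satisfies the exact Condorcet criterion, provided there exist two distinct profiles with distinct Condorcet committees. -/
import Mathlib


open scoped Classical

noncomputable section

/-- A profile assigns to each of the `n` voters an approval ballot (a finite set of alternatives). -/
abbrev Profile (A : Type) (n : ℕ) := Fin n → Finset A

/-- Two profiles are neighboring if they differ in at most one voter's ballot. -/
def Neighboring {A : Type} {n : ℕ} (P P' : Profile A n) : Prop :=
  ∃ i : Fin n, ∀ j : Fin n, j ≠ i → P j = P' j

/-- `W'` Pareto-dominates `W` in profile `P`. -/
def ParetoDom {A : Type} [DecidableEq A] {n : ℕ} (P : Profile A n) (W' W : Finset A) : Prop :=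
  (∀ i, (W ∩ P i).card ≤ (W' ∩ P i).card) ∧ (∃ i, (W ∩ P i).card < (W' ∩ P i).card)

/-- The set of alternatives approved by every voter in `V`. -/
def commonApproved {A : Type} [Fintype A] {n : ℕ} (P : Profile A n) (V : Finset (Fin n)) :
    Finset A :=
  Finset.univ.filter (fun a => ∀ i ∈ V, a ∈ P i)

/-- `V` is an `ℓ`-cohesive group for `(P, k)`: `|V| ≥ ℓ·n/k` and `|⋂_{i∈V} P i| ≥ ℓ`. -/
def Cohesive {A : Type} [Fintype A] {n : ℕ} (P : Profile A n) (k ℓ : ℕ)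
    (V : Finset (Fin n)) : Prop :=
  ℓ * n ≤ V.card * k ∧ ℓ ≤ (commonApproved P V).card

/-- Committee `W` (of size `k`) satisfies justified representation for `(P, k)`. -/
def JRsat {A : Type} [Fintype A] [DecidableEq A] {n : ℕ} (P : Profile A n) (k : ℕ)
    (W : Finset A) : Prop :=
  W.card = k ∧ ∀ V : Finset (Fin n), Cohesive P k 1 V → ∃ i ∈ V, (P i ∩ W).Nonempty

/-- Committee `W` satisfies proportional justified representation for `(P, k)`. -/
def PJRsat {A : Type} [Fintype A] [DecidableEq A] {n : ℕ} (P : Profile A n) (k : ℕ)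
    (W : Finset A) : Prop :=
  W.card = k ∧ ∀ (ℓ : ℕ) (V : Finset (Fin n)), 1 ≤ ℓ → Cohesive P k ℓ V →
    ℓ ≤ (W ∩ V.biUnion P).card

/-- Committee `W` satisfies extended justified representation for `(P, k)`. -/
def EJRsat {A : Type} [Fintype A] [DecidableEq A] {n : ℕ} (P : Profile A n) (k : ℕ)
    (W : Finset A) : Prop :=
  W.card = k ∧ ∀ (ℓ : ℕ) (V : Finset (Fin n)), 1 ≤ ℓ → Cohesive P k ℓ V →
    ∃ i ∈ V, ℓ ≤ (P i ∩ W).card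

/-- `W` is a Condorcet committee for `(P, k)`: against every other size-`k` committee,
strictly more than half of the voters prefer `W`. -/
def CondorcetCommittee {A : Type} [Fintype A] [DecidableEq A] {n : ℕ} (P : Profile A n)
    (k : ℕ) (W : Finset A) : Prop :=
  W.card = k ∧ ∀ W' : Finset A, W'.card = k → W' ≠ W →
    n < 2 * (Finset.univ.filter
      (fun i : Fin n => (P i ∩ W').card < (P i ∩ W).card)).card

/-- A randomized approval-based committee (ABC) rule: for each profile and committee size `k`,
a probability distribution over the size-`k` committees. -/
structure ABCRule (A : Type) [Fintype A] [DecidableEq A] (n : ℕ) where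
  prob : Profile A n → ℕ → Finset A → ℝ
  nonneg : ∀ P k W, 0 ≤ prob P k W
  size_eq : ∀ P k W, prob P k W ≠ 0 → W.card = k
  sum_one : ∀ P k, k ≤ Fintype.card A →
    ∑ W ∈ Finset.univ.filter (fun W : Finset A => W.card = k), prob P k W = 1

variable {A : Type} [Fintype A] [DecidableEq A] {n : ℕ}

/-- ε-differential privacy at committee size `k`. -/
def DPAt (f : ABCRule A n) (k : ℕ) (ε : ℝ) : Prop :=
  ∀ (P P' : Profile A n) (W : Finset A),
    Neighboring P P' → f.prob P k W ≤ Real.exp ε * f.prob P' k W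

/-- ε-differential privacy: single-ballot changes alter each committee's winning
probability by a factor of at most `e^ε`. -/
def DP (f : ABCRule A n) (ε : ℝ) : Prop := ∀ k : ℕ, DPAt f k ε

/-- Neutrality: the rule commutes with permutations of the alternatives. -/
def Neutral (f : ABCRule A n) : Prop :=
  ∀ (σ : Equiv.Perm A) (P : Profile A n) (k : ℕ) (W : Finset A),
    f.prob (fun i => (P i).image σ) k (W.image σ) = f.prob P k W

/-- θ-JR: each JR committee wins with probability at least θ times that of each non-JR one. -/
def ThetaJR (f : ABCRule A n) (θ : ℝ) : Prop :=
  ∀ (P : Profile A n) (k : ℕ) (W₁ W₂ : Finset A),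
    JRsat P k W₁ → W₂.card = k → ¬ JRsat P k W₂ →
      θ * f.prob P k W₂ ≤ f.prob P k W₁

/-- ρ-PJR. -/
def RhoPJR (f : ABCRule A n) (ρ : ℝ) : Prop :=
  ∀ (P : Profile A n) (k : ℕ) (W₁ W₂ : Finset A),
    PJRsat P k W₁ → W₂.card = k → ¬ PJRsat P k W₂ →
      ρ * f.prob P k W₂ ≤ f.prob P k W₁

/-- κ-EJR. -/
def KappaEJR (f : ABCRule A n) (κ : ℝ) : Prop :=
  ∀ (P : Profile A n) (k : ℕ) (W₁ W₂ : Finset A),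
    EJRsat P k W₁ → W₂.card = k → ¬ EJRsat P k W₂ →
      κ * f.prob P k W₂ ≤ f.prob P k W₁

/-- Exact Condorcet criterion: whenever a Condorcet committee exists, it wins with
probability one. -/
def CondorcetCrit (f : ABCRule A n) : Prop :=
  ∀ (P : Profile A n) (k : ℕ) (W : Finset A),
    CondorcetCommittee P k W → f.prob P k W = 1

/-- η-Condorcet criterion. -/
def EtaCC (f : ABCRule A n) (η : ℝ) : Prop :=
  ∀ (P : Profile A n) (k : ℕ) (Wc W : Finset A),
    CondorcetCommittee P k Wc → W.card = k → W ≠ Wc →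
      η * f.prob P k W ≤ f.prob P k Wc

/-- Exact Pareto efficiency at committee size `k`: no committee in the support is
Pareto-dominated by another size-`k` committee. -/
def ParetoEffAt (f : ABCRule A n) (k : ℕ) : Prop :=
  ∀ (P : Profile A n) (W : Finset A), f.prob P k W ≠ 0 →
    ∀ W' : Finset A, W'.card = k → ¬ ParetoDom P W' W

/-- β-Pareto efficiency at committee size `k`. -/
def BetaPEAt (f : ABCRule A n) (k : ℕ) (β : ℝ) : Prop :=
  ∀ (P : Profile A n) (W₁ W₂ : Finset A), W₁.card = k → W₂.card = k →
    ParetoDom P W₁ W₂ → β * f.prob P k W₂ ≤ f.prob P k W₁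

/-- The approval voting score of a committee. -/
def AV (P : Profile A n) (W : Finset A) : ℕ := ∑ j, (P j ∩ W).card

/-- The set of size-`k` committees satisfying JR for `(P, k)`. -/
def JRset (P : Profile A n) (k : ℕ) : Finset (Finset A) :=
  Finset.univ.filter (fun W => JRsat P k W)

/-- No ε-DP (ε > 0) ABC rule satisfies the exact Condorcet criterion,
provided two profiles with distinct Condorcet committees (for the same size k) exist. -/
theorem dp_not_condorcet (f : ABCRule A n) (ε : ℝ) (hε : 0 < ε) (hDP : DP f ε)
    (hW : ∃ (P P' : Profile A n) (k : ℕ) (W W' : Finset A),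
      CondorcetCommittee P k W ∧ CondorcetCommittee P' k W' ∧ W ≠ W') :
    ¬ CondorcetCrit f := by
  intro hCC
  obtain ⟨P, P', k, W, W', hW1, hW2, hne⟩ := hW
  have h1 : f.prob P k W = 1 := hCC P k W hW1
  have h2 : f.prob P' k W' = 1 := hCC P' k W' hW2
  -- hybrid profiles
  set Q : ℕ → Profile A n := fun t j => if j.val < t then P' j else P j with hQ
  have hQ0 : Q 0 = P := funext fun j => by simp [hQ]
  have hQn : Q n = P' := funext fun j => by simp [hQ, j.isLt]
  have hpos : ∀ t, 0 < f.prob (Q t) k W := by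
    intro t
    induction t with
    | zero => rw [hQ0, h1]; norm_num
    | succ t ih =>
      by_cases ht : t < n
      · have hnb : Neighboring (Q t) (Q (t + 1)) := by
          refine ⟨⟨t, ht⟩, fun j hj => ?_⟩
          have hjt : j.val ≠ t := fun h => hj (Fin.ext h)
          simp only [hQ]
          by_cases hlt : j.val < t
          · simp [hlt, Nat.lt_succ_of_lt hlt]
          · have : ¬ j.val < t + 1 := by omega
            simp [hlt, this]
        have hdp := hDP k (Q t) (Q (t + 1)) W hnb
        have hnn := f.nonneg (Q (t + 1)) k W
        rcases lt_or_eq_of_le hnn with h | h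
        · exact h
        · exfalso; rw [← h] at hdp; simp at hdp; linarith
      · have heq : Q (t + 1) = Q t := by
          funext j
          have : j.val < t + 1 ↔ j.val < t := by have := j.isLt; omega
          simp [hQ, this]
        rw [heq]; exact ih
  have hposP' : 0 < f.prob P' k W := hQn ▸ hpos n
  -- sum argument at P'
  have hk : k ≤ Fintype.card A := hW1.1 ▸ Finset.card_le_univ W
  have hsum := f.sum_one P' k hk
  set S := Finset.univ.filter (fun V : Finset A => V.card = k) with hS
  have hWin : W ∈ S := Finset.mem_filter.2 ⟨Finset.mem_univ _, hW1.1⟩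
  have hW'in : W' ∈ S := Finset.mem_filter.2 ⟨Finset.mem_univ _, hW2.1⟩
  have hsub : ({W, W'} : Finset (Finset A)) ⊆ S := by
    intro x hx
    rcases Finset.mem_insert.1 hx with h | h
    · exact h ▸ hWin
    · exact (Finset.mem_singleton.1 h) ▸ hW'in
  have hle : f.prob P' k W + f.prob P' k W' ≤ 1 := by
    have := Finset.sum_le_sum_of_subset_of_nonneg hsub
      (fun V _ _ => f.nonneg P' k V)
    rw [Finset.sum_pair hne, hsum] at this
    exact this
  rw [h2] at hle
  linarith
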